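/- Let x ∈ ℝⁿ be nonzero. A vector y ∈ ℝⁿ lies in Cone(x) if and only if there exist strictly positive real numbers μ_z, one for each z ∈ Λ(x), such that y = ∑_{z ∈ Λ(x)} μ_z·z. Moreover, y lies in the closure of Cone(x) if and only if there exist nonnegative real numbers μ_z, z ∈ Λ(x), with y = ∑_{z ∈ Λ(x)} μ_z·z. -/

import Mathlib

open Real Filter Set

/-- Euclidean norm of a vector in `Fin k → ℝ`. -/
noncomputable def euclNorm {k : ℕ} (x : Fin k → ℝ) : ℝ := Real.sqrt (∑ i, x i ^ 2)

/-- ℓ¹ norm of a vector in `Fin k → ℝ`. -/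
noncomputable def l1Norm {k : ℕ} (x : Fin k → ℝ) : ℝ := ∑ i, |x i|

/-- `s` is a ternary sign vector, i.e. `s ∈ {−1,0,1}ⁿ`. -/
def IsTern {k : ℕ} (s : Fin k → ℝ) : Prop := ∀ i, s i = -1 ∨ s i = 0 ∨ s i = 1

/-- `x` belongs to the ternary quantized set `Q₃ = {δ·s : δ ≥ 0, s ∈ {−1,0,1}ⁿ}`. -/
def InQ3 {k : ℕ} (x : Fin k → ℝ) : Prop :=
  ∃ δ : ℝ, 0 ≤ δ ∧ ∃ s : Fin k → ℝ, IsTern s ∧ x = δ • s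

/-- `u` is a normalized ternary projection of `y`: `u = s/‖s‖` for a nonzero
ternary sign vector `s` maximizing `⟨y, s'⟩/‖s'‖` over nonzero ternary `s'`. -/
noncomputable def IsNTernProj {k : ℕ} (y u : Fin k → ℝ) : Prop :=
  ∃ s : Fin k → ℝ, IsTern s ∧ s ≠ 0 ∧
    (∀ s' : Fin k → ℝ, IsTern s' → s' ≠ 0 →
      (∑ i, y i * s' i) / euclNorm s' ≤ (∑ i, y i * s i) / euclNorm s) ∧
    u = fun i => s i / euclNorm s

/-- The vertex set `Λ(x)` of a nonzero `x`, relative to a permutation `σ` sorting the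
coordinates of `x` by decreasing absolute value: for each admissible `j` (0-indexed),
the unit vector `(1/√(j+1))·∑_{l ≤ j} sgn(x_{σ(l)})·e_{σ(l)}`. -/
noncomputable def vertexSet {k : ℕ} (σ : Equiv.Perm (Fin k)) (x : Fin k → ℝ) :
    Set (Fin k → ℝ) :=
  {u | ∃ j : ℕ, ∃ hj : j < k, x (σ ⟨j, hj⟩) ≠ 0 ∧
      (j + 1 = k ∨ ∃ hj1 : j + 1 < k, |x (σ ⟨j + 1, hj1⟩)| < |x (σ ⟨j, hj⟩)|) ∧
      u = fun i => if ∃ l : Fin k, (l : ℕ) ≤ j ∧ σ l = i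
            then Real.sign (x i) / Real.sqrt (j + 1) else 0}

/-- The cone of `x`: vectors in the orthant of `x` whose coordinates are ordered in
absolute value in the same way as those of `x`. -/
def ConeOf {k : ℕ} (x : Fin k → ℝ) : Set (Fin k → ℝ) :=
  {y | (∀ i, Real.sign (y i) = Real.sign (x i)) ∧
       ∀ i j, Real.sign (|y j| - |y i|) = Real.sign (|x j| - |x i|)}

section Aux
variable {n : ℕ}

/-- sorted-coordinate absolute values, with junk value 0 out of range -/
noncomputable def bseq (σ : Equiv.Perm (Fin n)) (y : Fin n → ℝ) (l : ℕ) : ℝ :=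
  if h : l < n then |y (σ ⟨l, h⟩)| else 0

noncomputable def Bset (σ : Equiv.Perm (Fin n)) (x : Fin n → ℝ) : Finset ℕ :=
  (Finset.range n).filter (fun j => bseq σ x (j + 1) < bseq σ x j)

noncomputable def Uvec (σ : Equiv.Perm (Fin n)) (x : Fin n → ℝ) (j : ℕ) : Fin n → ℝ :=
  fun i => if (σ.symm i : ℕ) ≤ j then Real.sign (x i) / Real.sqrt (j + 1) else 0

variable (σ : Equiv.Perm (Fin n)) (x y : Fin n → ℝ)

lemma sign_mul_abs' (a : ℝ) : Real.sign a * |a| = a := by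
  rcases lt_trichotomy a 0 with h | h | h
  · rw [Real.sign_of_neg h, abs_of_neg h]; ring
  · simp [h]
  · rw [Real.sign_of_pos h, abs_of_pos h]; ring

lemma sign_neg_one_imp {t : ℝ} (h : Real.sign t = -1) : t < 0 := by
  rcases lt_trichotomy t 0 with h' | h' | h'
  · exact h'
  · rw [h', Real.sign_zero] at h; norm_num at h
  · rw [Real.sign_of_pos h'] at h; norm_num at h

lemma bseq_nonneg (l : ℕ) : 0 ≤ bseq σ y l := by
  unfold bseq; split
  · exact abs_nonneg _
  · exact le_refl 0

lemma bseq_lt {l : ℕ} (h : l < n) : bseq σ y l = |y (σ ⟨l, h⟩)| := dif_pos h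

lemma bseq_ge {l : ℕ} (h : ¬ l < n) : bseq σ y l = 0 := dif_neg h

lemma bseq_symm (i : Fin n) : bseq σ y ((σ.symm i : ℕ)) = |y i| := by
  rw [bseq_lt σ y (σ.symm i).isLt]
  congr 1
  rw [Fin.eta, Equiv.apply_symm_apply]

lemma mem_Bset {j : ℕ} : j ∈ Bset σ x ↔ j < n ∧ bseq σ x (j + 1) < bseq σ x j := by
  simp [Bset]

end Aux

section Aux2
variable {n : ℕ} (σ : Equiv.Perm (Fin n)) (x y : Fin n → ℝ)

lemma bseq_anti (hσ : ∀ a b : Fin n, a ≤ b → |x (σ b)| ≤ |x (σ a)|)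
    {l1 l2 : ℕ} (h : l1 ≤ l2) : bseq σ x l2 ≤ bseq σ x l1 := by
  by_cases h2 : l2 < n
  · have h1 : l1 < n := lt_of_le_of_lt h h2
    rw [bseq_lt σ x h2, bseq_lt σ x h1]
    exact hσ ⟨l1, h1⟩ ⟨l2, h2⟩ h
  · rw [bseq_ge σ x h2]; exact bseq_nonneg σ x l1

lemma bseq_pos_of_mem {j : ℕ} (hj : j ∈ Bset σ x) : 0 < bseq σ x j :=
  lt_of_le_of_lt (bseq_nonneg σ x (j + 1)) ((mem_Bset σ x).1 hj).2

lemma x_ne_zero_of_mem {j : ℕ} (hj : j ∈ Bset σ x) (hjn : j < n) :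
    x (σ ⟨j, hjn⟩) ≠ 0 := by
  have := bseq_pos_of_mem σ x hj
  rw [bseq_lt σ x hjn] at this
  exact abs_pos.1 this

lemma exists_break (hσ : ∀ a b : Fin n, a ≤ b → |x (σ b)| ≤ |x (σ a)|)
    {l1 l2 : ℕ} (h12 : l1 < l2) (h2n : l2 ≤ n) (hlt : bseq σ x l2 < bseq σ x l1) :
    ∃ j ∈ Bset σ x, l1 ≤ j ∧ j < l2 := by
  classical
  set M := (Finset.Ico l1 l2).filter (fun j => bseq σ x j = bseq σ x l1) with hM
  have hl1M : l1 ∈ M := by simp [hM, Finset.mem_filter, Finset.mem_Ico, h12]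
  have hMne : M.Nonempty := ⟨l1, hl1M⟩
  set j := M.max' hMne with hj
  have hjM : j ∈ M := M.max'_mem hMne
  simp only [hM, Finset.mem_filter, Finset.mem_Ico] at hjM
  obtain ⟨⟨hl1j, hjl2⟩, hbj⟩ := hjM
  have hjn : j < n := lt_of_lt_of_le hjl2 h2n
  have hlt' : bseq σ x (j + 1) < bseq σ x j := by
    rcases eq_or_lt_of_le (Nat.succ_le_of_lt hjl2) with he | hl
    · rw [show j + 1 = l2 from he, hbj]; exact hlt
    · have hle : bseq σ x (j + 1) ≤ bseq σ x l1 :=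
        hbj ▸ bseq_anti σ x hσ (Nat.le_succ j)
      have hne : bseq σ x (j + 1) ≠ bseq σ x l1 := by
        intro hE
        have hmem : j + 1 ∈ M := by
          simp only [hM, Finset.mem_filter, Finset.mem_Ico]
          exact ⟨⟨le_trans hl1j (Nat.le_succ j), hl⟩, hE⟩
        exact (Nat.lt_irrefl j) (lt_of_lt_of_le (Nat.lt_succ_self j) (M.le_max' _ hmem))
      rw [hbj]; exact lt_of_le_of_ne hle hne
  exact ⟨j, (mem_Bset σ x).2 ⟨hjn, hlt'⟩, hl1j, hjl2⟩

lemma break_lt (hσ : ∀ a b : Fin n, a ≤ b → |x (σ b)| ≤ |x (σ a)|)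
    {j l1 l2 : ℕ} (hj : j ∈ Bset σ x) (h1 : l1 ≤ j) (h2 : j < l2) :
    bseq σ x l2 < bseq σ x l1 :=
  lt_of_le_of_lt (bseq_anti σ x hσ (Nat.succ_le_of_lt h2))
    (lt_of_lt_of_le ((mem_Bset σ x).1 hj).2 (bseq_anti σ x hσ h1))

end Aux2

section Aux3
variable {n : ℕ} (σ : Equiv.Perm (Fin n)) (x y : Fin n → ℝ)

noncomputable def Tsum (c : ℕ → ℝ) (l : ℕ) : ℝ :=
  ∑ j ∈ (Bset σ x).filter (fun j => l ≤ j), c j / Real.sqrt (j + 1)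

lemma sum_U_apply (c : ℕ → ℝ) (i : Fin n) :
    (∑ j ∈ Bset σ x, c j • Uvec σ x j) i
      = Real.sign (x i) * Tsum σ x c (σ.symm i : ℕ) := by
  rw [Finset.sum_apply, Tsum, Finset.mul_sum, Finset.sum_filter]
  refine Finset.sum_congr rfl fun j hj => ?_
  simp only [Pi.smul_apply, smul_eq_mul, Uvec]
  split_ifs <;> ring

lemma Tsum_nonneg (c : ℕ → ℝ) (hc : ∀ j ∈ Bset σ x, 0 ≤ c j) (l : ℕ) :
    0 ≤ Tsum σ x c l :=
  Finset.sum_nonneg fun j hj =>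
    div_nonneg (hc j (Finset.mem_of_mem_filter j hj)) (Real.sqrt_nonneg _)

lemma Tsum_anti (c : ℕ → ℝ) (hc : ∀ j ∈ Bset σ x, 0 ≤ c j) {l1 l2 : ℕ} (h : l1 ≤ l2) :
    Tsum σ x c l2 ≤ Tsum σ x c l1 := by
  refine Finset.sum_le_sum_of_subset_of_nonneg ?_ fun j hj _ =>
    div_nonneg (hc j (Finset.mem_of_mem_filter j hj)) (Real.sqrt_nonneg _)
  exact Finset.monotone_filter_right _ fun j _ hj => le_trans h hj

lemma Tsum_sub (c : ℕ → ℝ) {l1 l2 : ℕ} (h : l1 ≤ l2) :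
    Tsum σ x c l1 - Tsum σ x c l2
      = ∑ j ∈ (Bset σ x).filter (fun j => l1 ≤ j ∧ j < l2), c j / Real.sqrt (j + 1) := by
  classical
  have hsub : (Bset σ x).filter (fun j => l2 ≤ j) ⊆ (Bset σ x).filter (fun j => l1 ≤ j) :=
    Finset.monotone_filter_right _ fun j _ hj => le_trans h hj
  have hsd := Finset.sum_sdiff (f := fun j => c j / Real.sqrt (j + 1)) hsub
  have hset : (Bset σ x).filter (fun j => l1 ≤ j) \ (Bset σ x).filter (fun j => l2 ≤ j)
      = (Bset σ x).filter (fun j => l1 ≤ j ∧ j < l2) := by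
    ext j
    simp only [Finset.mem_sdiff, Finset.mem_filter]
    constructor
    · rintro ⟨⟨hB, h1⟩, h2⟩
      refine ⟨hB, h1, ?_⟩
      by_contra hc'
      exact h2 ⟨hB, not_lt.1 hc'⟩
    · rintro ⟨hB, h1, h2⟩
      exact ⟨⟨hB, h1⟩, fun hc' => absurd hc'.2 (not_le.2 h2)⟩
  rw [hset] at hsd
  unfold Tsum
  linarith [hsd]

lemma Tsum_pos (hσ : ∀ a b : Fin n, a ≤ b → |x (σ b)| ≤ |x (σ a)|)
    (c : ℕ → ℝ) (hc : ∀ j ∈ Bset σ x, 0 < c j) {l : ℕ} (hl : l < n)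
    (h : bseq σ x l ≠ 0) : 0 < Tsum σ x c l := by
  have h0 : bseq σ x n = 0 := bseq_ge σ x (lt_irrefl n)
  have hpos : 0 < bseq σ x l := lt_of_le_of_ne (bseq_nonneg σ x l) (Ne.symm h)
  obtain ⟨j, hjB, hlj, _⟩ := exists_break σ x hσ hl (le_refl n) (by rw [h0]; exact hpos)
  refine Finset.sum_pos' (fun j' hj' => div_nonneg (le_of_lt (hc j' (Finset.mem_of_mem_filter j' hj'))) (Real.sqrt_nonneg _)) ⟨j, ?_, ?_⟩
  · exact Finset.mem_filter.2 ⟨hjB, hlj⟩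
  · exact div_pos (hc j hjB) (Real.sqrt_pos.2 (by positivity))

lemma Tsum_zero' (hσ : ∀ a b : Fin n, a ≤ b → |x (σ b)| ≤ |x (σ a)|)
    (c : ℕ → ℝ) {l : ℕ} (h : bseq σ x l = 0) : Tsum σ x c l = 0 := by
  refine Finset.sum_eq_zero fun j hj => ?_
  rw [Finset.mem_filter] at hj
  obtain ⟨hjB, hlj⟩ := hj
  have h1 : 0 < bseq σ x j := bseq_pos_of_mem σ x hjB
  have h2 : bseq σ x j ≤ bseq σ x l := bseq_anti σ x hσ hlj
  rw [h] at h2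
  linarith

end Aux3

section Aux4
variable {n : ℕ} (σ : Equiv.Perm (Fin n)) (x : Fin n → ℝ)

lemma Tsum_sign_core (hσ : ∀ a b : Fin n, a ≤ b → |x (σ b)| ≤ |x (σ a)|)
    (c : ℕ → ℝ) (hc : ∀ j ∈ Bset σ x, 0 < c j) {l1 l2 : ℕ}
    (h12 : l1 ≤ l2) (h2 : l2 ≤ n) :
    Real.sign (Tsum σ x c l2 - Tsum σ x c l1) = Real.sign (bseq σ x l2 - bseq σ x l1) := by
  rcases eq_or_lt_of_le (bseq_anti σ x hσ h12) with he | hlt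
  · have hT : Tsum σ x c l1 - Tsum σ x c l2 = 0 := by
      rw [Tsum_sub σ x c h12]
      refine Finset.sum_eq_zero fun j hj => ?_
      rw [Finset.mem_filter] at hj
      obtain ⟨hjB, hj1, hj2⟩ := hj
      have hbl := break_lt σ x hσ hjB hj1 hj2
      rw [he] at hbl
      exact absurd hbl (lt_irrefl _)
    rw [he, sub_self, show Tsum σ x c l2 - Tsum σ x c l1 = 0 by linarith, Real.sign_zero]
  · have hl12 : l1 < l2 := lt_of_le_of_ne h12 (fun h => by rw [h] at hlt; exact lt_irrefl _ hlt)
    obtain ⟨j, hjB, hj1, hj2⟩ := exists_break σ x hσ hl12 h2 hlt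
    have hTpos : 0 < Tsum σ x c l1 - Tsum σ x c l2 := by
      rw [Tsum_sub σ x c h12]
      refine Finset.sum_pos' (fun j' hj' => div_nonneg (le_of_lt (hc j' (Finset.mem_of_mem_filter j' hj'))) (Real.sqrt_nonneg _)) ⟨j, ?_, ?_⟩
      · exact Finset.mem_filter.2 ⟨hjB, hj1, hj2⟩
      · exact div_pos (hc j hjB) (Real.sqrt_pos.2 (by positivity))
    rw [Real.sign_of_neg (by linarith : Tsum σ x c l2 - Tsum σ x c l1 < 0),
        Real.sign_of_neg (by linarith : bseq σ x l2 - bseq σ x l1 < 0)]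

lemma combo_mem_cone (hσ : ∀ a b : Fin n, a ≤ b → |x (σ b)| ≤ |x (σ a)|)
    (c : ℕ → ℝ) (hc : ∀ j ∈ Bset σ x, 0 < c j) :
    (∑ j ∈ Bset σ x, c j • Uvec σ x j) ∈ ConeOf x := by
  have hc' : ∀ j ∈ Bset σ x, 0 ≤ c j := fun j hj => le_of_lt (hc j hj)
  set y := ∑ j ∈ Bset σ x, c j • Uvec σ x j with hy
  have hyi : ∀ i, y i = Real.sign (x i) * Tsum σ x c (σ.symm i : ℕ) :=
    fun i => sum_U_apply σ x c i
  have habs : ∀ i, |y i| = Tsum σ x c (σ.symm i : ℕ) := by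
    intro i
    have hT := Tsum_nonneg σ x c hc' (σ.symm i : ℕ)
    rcases Real.sign_apply_eq (x i) with h | h | h
    · rw [hyi i, h, show (-1 : ℝ) * Tsum σ x c (σ.symm i : ℕ) = -(Tsum σ x c (σ.symm i : ℕ)) by ring,
          abs_neg, abs_of_nonneg hT]
    · have hx0 : x i = 0 := Real.sign_eq_zero_iff.1 h
      have hb0 : bseq σ x (σ.symm i : ℕ) = 0 := by rw [bseq_symm, hx0, abs_zero]
      rw [hyi i, h, Tsum_zero' σ x hσ c hb0]
      simp
    · rw [hyi i, h, one_mul, abs_of_nonneg hT]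
  constructor
  · intro i
    rcases lt_trichotomy (x i) 0 with h | h | h
    · have hs : Real.sign (x i) = -1 := Real.sign_of_neg h
      have hb : bseq σ x (σ.symm i : ℕ) ≠ 0 := by
        rw [bseq_symm]; exact abs_ne_zero.2 (ne_of_lt h)
      have hT : 0 < Tsum σ x c (σ.symm i : ℕ) := Tsum_pos σ x hσ c hc (σ.symm i).isLt hb
      rw [hyi i, hs, Real.sign_of_neg (by nlinarith)]
    · rw [hyi i, h, Real.sign_zero, zero_mul, Real.sign_zero]
    · have hs : Real.sign (x i) = 1 := Real.sign_of_pos h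
      have hb : bseq σ x (σ.symm i : ℕ) ≠ 0 := by
        rw [bseq_symm]; exact abs_ne_zero.2 (ne_of_gt h)
      have hT : 0 < Tsum σ x c (σ.symm i : ℕ) := Tsum_pos σ x hσ c hc (σ.symm i).isLt hb
      rw [hyi i, hs, Real.sign_of_pos (by nlinarith)]
  · intro i j
    rw [habs i, habs j, ← bseq_symm σ x i, ← bseq_symm σ x j]
    rcases le_total ((σ.symm i : ℕ)) ((σ.symm j : ℕ)) with h | h
    · exact Tsum_sign_core σ x hσ c hc h (le_of_lt (σ.symm j).isLt)
    · rw [show Tsum σ x c (σ.symm j : ℕ) - Tsum σ x c (σ.symm i : ℕ)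
            = -(Tsum σ x c (σ.symm i : ℕ) - Tsum σ x c (σ.symm j : ℕ)) by ring,
          show bseq σ x (σ.symm j : ℕ) - bseq σ x (σ.symm i : ℕ)
            = -(bseq σ x (σ.symm i : ℕ) - bseq σ x (σ.symm j : ℕ)) by ring,
          Real.sign_neg, Real.sign_neg,
          Tsum_sign_core σ x hσ c hc h (le_of_lt (σ.symm i).isLt)]

end Aux4



section Aux5
variable {n : ℕ} (σ : Equiv.Perm (Fin n)) (x y : Fin n → ℝ)

lemma cone_b_lt (hy : y ∈ ConeOf x) {j : ℕ} (hj : j ∈ Bset σ x) :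
    bseq σ y (j + 1) < bseq σ y j := by
  obtain ⟨hjn, hlt⟩ := (mem_Bset σ x).1 hj
  by_cases h1 : j + 1 < n
  · have hsgn := hy.2 (σ ⟨j, hjn⟩) (σ ⟨j + 1, h1⟩)
    rw [← bseq_lt σ y h1, ← bseq_lt σ y hjn, ← bseq_lt σ x h1, ← bseq_lt σ x hjn,
        Real.sign_of_neg (sub_neg.2 hlt)] at hsgn
    have := sign_neg_one_imp hsgn
    linarith
  · have hx0 : x (σ ⟨j, hjn⟩) ≠ 0 := x_ne_zero_of_mem σ x hj hjn
    have hy0 : y (σ ⟨j, hjn⟩) ≠ 0 := by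
      intro h0
      apply hx0
      have hs := hy.1 (σ ⟨j, hjn⟩)
      rw [h0, Real.sign_zero] at hs
      exact Real.sign_eq_zero_iff.1 hs.symm
    rw [bseq_ge σ y h1, bseq_lt σ y hjn]
    exact abs_pos.2 hy0

lemma cone_nu_pos (hy : y ∈ ConeOf x) {j : ℕ} (hj : j ∈ Bset σ x) :
    0 < (bseq σ y j - bseq σ y (j + 1)) * Real.sqrt (j + 1) :=
  mul_pos (sub_pos.2 (cone_b_lt σ x y hy hj)) (Real.sqrt_pos.2 (by positivity))

lemma cone_eq_Phi (hσ : ∀ a b : Fin n, a ≤ b → |x (σ b)| ≤ |x (σ a)|)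
    (hy : y ∈ ConeOf x) :
    y = ∑ j ∈ Bset σ x,
        ((bseq σ y j - bseq σ y (j + 1)) * Real.sqrt (j + 1)) • Uvec σ x j := by
  funext i
  rw [sum_U_apply]
  have hln : ((σ.symm i : ℕ)) < n := (σ.symm i).isLt
  have step1 : Tsum σ x (fun j => (bseq σ y j - bseq σ y (j + 1)) * Real.sqrt (j + 1)) (σ.symm i : ℕ)
      = ∑ j ∈ (Bset σ x).filter (fun j => (σ.symm i : ℕ) ≤ j), (bseq σ y j - bseq σ y (j + 1)) :=
    Finset.sum_congr rfl fun j hj =>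
      mul_div_cancel_right₀ _ (ne_of_gt (Real.sqrt_pos.2 (by positivity)))
  have step2 : ∑ j ∈ (Bset σ x).filter (fun j => (σ.symm i : ℕ) ≤ j), (bseq σ y j - bseq σ y (j + 1))
      = ∑ j ∈ Finset.Ico (σ.symm i : ℕ) n, (bseq σ y j - bseq σ y (j + 1)) := by
    refine Finset.sum_subset ?_ ?_
    · intro j hj
      rw [Finset.mem_filter] at hj
      exact Finset.mem_Ico.2 ⟨hj.2, ((mem_Bset σ x).1 hj.1).1⟩
    · intro j hj hnot
      rw [Finset.mem_Ico] at hj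
      have hjB : j ∉ Bset σ x := fun hB => hnot (Finset.mem_filter.2 ⟨hB, hj.1⟩)
      have hnlt : ¬ bseq σ x (j + 1) < bseq σ x j :=
        fun hlt => hjB ((mem_Bset σ x).2 ⟨hj.2, hlt⟩)
      have heq : bseq σ y j = bseq σ y (j + 1) := by
        by_cases h1 : j + 1 < n
        · have hxeq : bseq σ x (j + 1) = bseq σ x j :=
            le_antisymm (bseq_anti σ x hσ (Nat.le_succ j)) (not_lt.1 hnlt)
          have hsgn := hy.2 (σ ⟨j, hj.2⟩) (σ ⟨j + 1, h1⟩)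
          rw [← bseq_lt σ y h1, ← bseq_lt σ y hj.2, ← bseq_lt σ x h1, ← bseq_lt σ x hj.2,
              hxeq, sub_self, Real.sign_zero] at hsgn
          have h0 := Real.sign_eq_zero_iff.1 hsgn
          linarith
        · have hbx1 : bseq σ x (j + 1) = 0 := bseq_ge σ x h1
          have hbx : bseq σ x j = 0 :=
            le_antisymm (by rw [← hbx1]; exact not_lt.1 hnlt) (bseq_nonneg σ x j)
          have hx0 : x (σ ⟨j, hj.2⟩) = 0 := by
            rw [bseq_lt σ x hj.2] at hbx; exact abs_eq_zero.1 hbx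
          have hy0 : y (σ ⟨j, hj.2⟩) = 0 := by
            have hs := hy.1 (σ ⟨j, hj.2⟩)
            rw [hx0, Real.sign_zero] at hs
            exact Real.sign_eq_zero_iff.1 hs
          rw [bseq_ge σ y h1, bseq_lt σ y hj.2, hy0, abs_zero]
      rw [heq, sub_self]
  have step3 : ∑ j ∈ Finset.Ico (σ.symm i : ℕ) n, (bseq σ y j - bseq σ y (j + 1))
      = bseq σ y (σ.symm i : ℕ) := by
    rw [Finset.sum_Ico_eq_sum_range]
    have h' : ∀ k, bseq σ y ((σ.symm i : ℕ) + k) - bseq σ y ((σ.symm i : ℕ) + k + 1)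
        = (fun k => bseq σ y ((σ.symm i : ℕ) + k)) k
          - (fun k => bseq σ y ((σ.symm i : ℕ) + k)) (k + 1) := fun k => by
      simp [Nat.add_assoc]
    rw [Finset.sum_congr rfl (fun k _ => h' k),
        Finset.sum_range_sub' (fun k => bseq σ y ((σ.symm i : ℕ) + k)),
        Nat.add_zero, Nat.add_sub_cancel' (le_of_lt hln), bseq_ge σ y (lt_irrefl n), sub_zero]
  rw [step1, step2, step3, bseq_symm σ y i, ← hy.1 i, sign_mul_abs']

end Aux5


section Aux6
variable {n : ℕ} (σ : Equiv.Perm (Fin n)) (x : Fin n → ℝ)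

lemma exists_le_iff (j : ℕ) (i : Fin n) :
    (∃ l : Fin n, (l : ℕ) ≤ j ∧ σ l = i) ↔ (σ.symm i : ℕ) ≤ j := by
  constructor
  · rintro ⟨l, hl, rfl⟩
    rwa [Equiv.symm_apply_apply]
  · intro h
    exact ⟨σ.symm i, h, σ.apply_symm_apply i⟩

lemma vertexSet_eq : vertexSet σ x = Uvec σ x '' (↑(Bset σ x) : Set ℕ) := by
  ext u
  simp only [vertexSet, Set.mem_setOf_eq, Set.mem_image, Finset.mem_coe, mem_Bset]
  constructor
  · rintro ⟨j, hj, hx0, hor, rfl⟩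
    refine ⟨j, ⟨hj, ?_⟩, ?_⟩
    · rcases hor with h1 | ⟨hj1, hlt⟩
      · rw [bseq_ge σ x (by omega), bseq_lt σ x hj]
        exact abs_pos.2 hx0
      · rw [bseq_lt σ x hj1, bseq_lt σ x hj]
        exact hlt
    · funext i
      simp only [Uvec]
      exact if_congr (exists_le_iff σ j i).symm rfl rfl
  · rintro ⟨j, ⟨hjn, hlt⟩, rfl⟩
    have hx0 : x (σ ⟨j, hjn⟩) ≠ 0 :=
      x_ne_zero_of_mem σ x ((mem_Bset σ x).2 ⟨hjn, hlt⟩) hjn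
    refine ⟨j, hjn, hx0, ?_, ?_⟩
    · by_cases h1 : j + 1 < n
      · right
        refine ⟨h1, ?_⟩
        rw [← bseq_lt σ x h1, ← bseq_lt σ x hjn]
        exact hlt
      · left; omega
    · funext i
      simp only [Uvec]
      exact if_congr (exists_le_iff σ j i).symm rfl rfl

lemma Uvec_injOn : Set.InjOn (Uvec σ x) (↑(Bset σ x) : Set ℕ) := by
  have key : ∀ a b : ℕ, a ∈ Bset σ x → b ∈ Bset σ x → a < b → Uvec σ x a ≠ Uvec σ x b := by
    intro a b ha hb hab he
    have hbn : b < n := ((mem_Bset σ x).1 hb).1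
    have hx0 : x (σ ⟨b, hbn⟩) ≠ 0 := x_ne_zero_of_mem σ x hb hbn
    have hcf := congrFun he (σ ⟨b, hbn⟩)
    simp only [Uvec, Equiv.symm_apply_apply, Fin.val_mk] at hcf
    rw [if_neg (by omega), if_pos (le_refl b)] at hcf
    exact (div_ne_zero (fun h0 => hx0 (Real.sign_eq_zero_iff.1 h0))
      (ne_of_gt (Real.sqrt_pos.2 (by positivity)))) hcf.symm
  intro j1 h1 j2 h2 he
  rcases lt_trichotomy j1 j2 with h | h | h
  · exact absurd he (key j1 j2 (Finset.mem_coe.1 h1) (Finset.mem_coe.1 h2) h)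
  · exact h
  · exact absurd he.symm (key j2 j1 (Finset.mem_coe.1 h2) (Finset.mem_coe.1 h1) h)

lemma finsum_vertex (f : (Fin n → ℝ) → (Fin n → ℝ)) :
    ∑ᶠ z ∈ vertexSet σ x, f z = ∑ j ∈ Bset σ x, f (Uvec σ x j) := by
  rw [vertexSet_eq, finsum_mem_image (Uvec_injOn σ x), finsum_mem_coe_finset]

lemma muc_apply (c : ℕ → ℝ) {j : ℕ} (hj : j ∈ Bset σ x) :
    (∑ j' ∈ Bset σ x, if Uvec σ x j' = Uvec σ x j then c j' else 0) = c j := by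
  classical
  have hcong : ∀ j' ∈ Bset σ x,
      (if Uvec σ x j' = Uvec σ x j then c j' else 0) = (if j' = j then c j' else 0) :=
    fun j' hj' => if_congr
      ⟨fun h => Uvec_injOn σ x (Finset.mem_coe.2 hj') (Finset.mem_coe.2 hj) h,
       fun h => by rw [h]⟩ rfl rfl
  rw [Finset.sum_congr rfl hcong, Finset.sum_ite_eq' _ j, if_pos hj]

lemma cont_bseq (l : ℕ) : Continuous (fun y : Fin n → ℝ => bseq σ y l) := by
  unfold bseq
  by_cases h : l < n
  · simp only [dif_pos h]
    exact (continuous_apply _).abs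
  · simp only [dif_neg h]
    exact continuous_const

lemma cont_Phi : Continuous (fun y : Fin n → ℝ => ∑ j ∈ Bset σ x,
    ((bseq σ y j - bseq σ y (j + 1)) * Real.sqrt (j + 1)) • Uvec σ x j) :=
  continuous_finset_sum _ fun j _ =>
    (((cont_bseq σ j).sub (cont_bseq σ (j + 1))).mul continuous_const).smul continuous_const

end Aux6

/-- Characterization of `Cone(x)` via the vertex set `Λ(x)`: a vector lies in `Cone(x)`
iff it is a strictly positive combination of the vertices of `x`, and it lies in the
closure of `Cone(x)` iff it is a nonnegative combination of the vertices of `x`. -/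
theorem stmt19 (n : ℕ) (x : Fin n → ℝ) (hx : x ≠ 0)
    (σ : Equiv.Perm (Fin n))
    (hσ : ∀ a b : Fin n, a ≤ b → |x (σ b)| ≤ |x (σ a)|)
    (y : Fin n → ℝ) :
    (y ∈ ConeOf x ↔ ∃ μ : (Fin n → ℝ) → ℝ,
      (∀ z ∈ vertexSet σ x, 0 < μ z) ∧ y = ∑ᶠ z ∈ vertexSet σ x, μ z • z) ∧
    (y ∈ closure (ConeOf x) ↔ ∃ μ : (Fin n → ℝ) → ℝ,
      (∀ z ∈ vertexSet σ x, 0 ≤ μ z) ∧ y = ∑ᶠ z ∈ vertexSet σ x, μ z • z) := by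
  classical
  constructor
  · constructor
    · intro hy
      refine ⟨fun z => ∑ j ∈ Bset σ x, if Uvec σ x j = z
          then (bseq σ y j - bseq σ y (j + 1)) * Real.sqrt (j + 1) else 0, ?_, ?_⟩
      · intro z hz
        rw [vertexSet_eq] at hz
        obtain ⟨j, hj, rfl⟩ := hz
        beta_reduce
        rw [muc_apply σ x _ (Finset.mem_coe.1 hj)]
        exact cone_nu_pos σ x y hy (Finset.mem_coe.1 hj)
      · rw [finsum_vertex σ x]
        beta_reduce
        have hcg : ∀ j ∈ Bset σ x,
            (∑ j' ∈ Bset σ x, if Uvec σ x j' = Uvec σ x j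
              then (bseq σ y j' - bseq σ y (j' + 1)) * Real.sqrt (j' + 1) else 0) • Uvec σ x j
            = ((bseq σ y j - bseq σ y (j + 1)) * Real.sqrt (j + 1)) • Uvec σ x j := by
          intro j hj
          rw [muc_apply σ x _ hj]
        rw [Finset.sum_congr rfl hcg]
        exact cone_eq_Phi σ x y hσ hy
    · rintro ⟨μ, hpos, hyeq⟩
      rw [hyeq, finsum_vertex σ x]
      exact combo_mem_cone σ x hσ (fun j => μ (Uvec σ x j)) (fun j hj => hpos _
        (by rw [vertexSet_eq]; exact Set.mem_image_of_mem _ (Finset.mem_coe.2 hj)))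
  · constructor
    · intro hy
      refine ⟨fun z => ∑ j ∈ Bset σ x, if Uvec σ x j = z
          then (bseq σ y j - bseq σ y (j + 1)) * Real.sqrt (j + 1) else 0, ?_, ?_⟩
      · intro z hz
        rw [vertexSet_eq] at hz
        obtain ⟨j, hj, rfl⟩ := hz
        have hjB := Finset.mem_coe.1 hj
        beta_reduce
        rw [muc_apply σ x _ hjB]
        have hle : bseq σ y (j + 1) ≤ bseq σ y j := by
          have hsub : ConeOf x ⊆ {y' : Fin n → ℝ | bseq σ y' (j + 1) ≤ bseq σ y' j} :=
            fun y' hy' => le_of_lt (cone_b_lt σ x y' hy' hjB)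
          have hclosed : IsClosed {y' : Fin n → ℝ | bseq σ y' (j + 1) ≤ bseq σ y' j} :=
            isClosed_le (cont_bseq σ (j + 1)) (cont_bseq σ j)
          exact closure_minimal hsub hclosed hy
        exact mul_nonneg (sub_nonneg.2 hle) (Real.sqrt_nonneg _)
      · rw [finsum_vertex σ x]
        beta_reduce
        have hcg : ∀ j ∈ Bset σ x,
            (∑ j' ∈ Bset σ x, if Uvec σ x j' = Uvec σ x j
              then (bseq σ y j' - bseq σ y (j' + 1)) * Real.sqrt (j' + 1) else 0) • Uvec σ x j
            = ((bseq σ y j - bseq σ y (j + 1)) * Real.sqrt (j + 1)) • Uvec σ x j := by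
          intro j hj
          rw [muc_apply σ x _ hj]
        rw [Finset.sum_congr rfl hcg]
        have heq : Set.EqOn (fun y' : Fin n → ℝ => ∑ j ∈ Bset σ x,
            ((bseq σ y' j - bseq σ y' (j + 1)) * Real.sqrt (j + 1)) • Uvec σ x j) id
            (closure (ConeOf x)) :=
          Set.EqOn.closure (fun y' hy' => (cone_eq_Phi σ x y' hσ hy').symm)
            (cont_Phi σ x) continuous_id
        exact (heq hy).symm
    · rintro ⟨μ, hnn, hyeq⟩
      rw [hyeq, finsum_vertex σ x]
      have hcnn : ∀ j ∈ Bset σ x, 0 ≤ μ (Uvec σ x j) := fun j hj => hnn _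
        (by rw [vertexSet_eq]; exact Set.mem_image_of_mem _ (Finset.mem_coe.2 hj))
      have hcont : Continuous (fun ε : ℝ =>
          ∑ j ∈ Bset σ x, (μ (Uvec σ x j) + ε) • Uvec σ x j) :=
        continuous_finset_sum _ fun j _ =>
          ((continuous_const.add continuous_id).smul continuous_const)
      have h0 : ∑ j ∈ Bset σ x, (μ (Uvec σ x j) + (0 : ℝ)) • Uvec σ x j
          = ∑ j ∈ Bset σ x, μ (Uvec σ x j) • Uvec σ x j := by simp
      refine mem_closure_of_tendsto
        (f := fun ε : ℝ => ∑ j ∈ Bset σ x, (μ (Uvec σ x j) + ε) • Uvec σ x j)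
        (b := nhdsWithin (0 : ℝ) (Set.Ioi 0)) ?_ ?_
      · have ht := (hcont.tendsto 0).mono_left
          (nhdsWithin_le_nhds (s := Set.Ioi (0 : ℝ)))
        rwa [h0] at ht
      · exact eventually_nhdsWithin_of_forall fun ε hε =>
          combo_mem_cone σ x hσ _ (fun j hj =>
            add_pos_of_nonneg_of_pos (hcnn j hj) (Set.mem_Ioi.1 hε))
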